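/- Let n ≥ 1 be an integer and let K : (0,∞) × [−1,1] → ℝ be a measurable function such that for every unit vector ω ∈ ℝⁿ the map ξ ↦ ‖ξ‖ · |K(‖ξ‖, ⟨ξ/‖ξ‖, ω⟩)| is integrable on ℝⁿ. Then there exists a constant k₁ ∈ ℝ, independent of ω, such that for every unit vector ω ∈ ℝⁿ the vector-valued integral K₁(ω) := ∫_{ℝⁿ} K(‖ξ‖, ⟨ξ/‖ξ‖, ω⟩) ξ dξ equals k₁ · ω. -/

import Mathlib

open MeasureTheory Real
open scoped RealInnerProductSpace Classical

/-- The kernel function `ξ ↦ K(‖ξ‖, ⟨ξ/‖ξ‖, ω⟩)`, extended by `0` at `ξ = 0`. -/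
noncomputable def kernelFun {n : ℕ} (K : ℝ → ℝ → ℝ) (ω ξ : EuclideanSpace ℝ (Fin n)) : ℝ :=
  if ξ = 0 then 0 else K ‖ξ‖ ⟪‖ξ‖⁻¹ • ξ, ω⟫

lemma kernelFun_equivariant {n : ℕ} (K : ℝ → ℝ → ℝ)
    (A : EuclideanSpace ℝ (Fin n) ≃ₗᵢ[ℝ] EuclideanSpace ℝ (Fin n))
    (ω ξ : EuclideanSpace ℝ (Fin n)) :
    kernelFun K (A ω) (A ξ) = kernelFun K ω ξ := by
  unfold kernelFun
  by_cases h : ξ = 0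
  · simp [h]
  · rw [if_neg h, if_neg (by simpa using h)]
    rw [A.norm_map]
    congr 1
    rw [← A.map_smul, A.inner_map_map]

lemma integral_equivariant {n : ℕ} (K : ℝ → ℝ → ℝ)
    (A : EuclideanSpace ℝ (Fin n) ≃ₗᵢ[ℝ] EuclideanSpace ℝ (Fin n))
    (ω : EuclideanSpace ℝ (Fin n)) :
    (∫ ξ, kernelFun K (A ω) ξ • ξ) = A (∫ ξ, kernelFun K ω ξ • ξ) := by
  have hmp : MeasurePreserving (A : EuclideanSpace ℝ (Fin n) → EuclideanSpace ℝ (Fin n))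
      volume volume := A.measurePreserving
  have hemb : MeasurableEmbedding (A : EuclideanSpace ℝ (Fin n) → EuclideanSpace ℝ (Fin n)) :=
    A.toHomeomorph.measurableEmbedding
  calc (∫ ξ, kernelFun K (A ω) ξ • ξ)
      = ∫ η, kernelFun K (A ω) (A η) • (A η) :=
        (hmp.integral_comp hemb (fun ξ => kernelFun K (A ω) ξ • ξ)).symm
    _ = ∫ η, A (kernelFun K ω η • η) := by
        congr 1; funext η
        rw [kernelFun_equivariant, A.map_smul]
    _ = A (∫ η, kernelFun K ω η • η) :=
        A.toLinearIsometry.integral_comp_comm _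

/-- The first moment `K₁(ω) = ∫_{ℝⁿ} K(‖ξ‖, ⟨ξ/‖ξ‖, ω⟩) ξ dξ` equals `k₁ • ω` for a
constant `k₁` independent of the unit vector `ω`. -/
theorem kernel_first_moment_parallel (n : ℕ) (hn : 1 ≤ n) (K : ℝ → ℝ → ℝ)
    (hK : Measurable (Function.uncurry K))
    (hint : ∀ ω : EuclideanSpace ℝ (Fin n), ‖ω‖ = 1 →
      Integrable (fun ξ => ‖ξ‖ * |kernelFun K ω ξ|)) :
    ∃ k₁ : ℝ, ∀ ω : EuclideanSpace ℝ (Fin n), ‖ω‖ = 1 →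
      (∫ ξ, kernelFun K ω ξ • ξ) = k₁ • ω := by
  -- a fixed unit vector
  set e : EuclideanSpace ℝ (Fin n) := EuclideanSpace.single ⟨0, hn⟩ (1 : ℝ) with he_def
  have he : ‖e‖ = 1 := by simp [he_def, EuclideanSpace.norm_single]
  set w : EuclideanSpace ℝ (Fin n) := ∫ ξ, kernelFun K e ξ • ξ with hw_def
  -- w is orthogonal to every vector orthogonal to e
  have horth : ∀ v : EuclideanSpace ℝ (Fin n), ⟪e, v⟫ = 0 → ⟪w, v⟫ = 0 := by
    intro v hv
    set B := Submodule.reflection (ℝ ∙ v)ᗮ with hB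
    have hBe : B e = e := by
      apply Submodule.reflection_mem_subspace_eq_self
      rw [Submodule.mem_orthogonal]
      intro u hu
      rcases Submodule.mem_span_singleton.mp hu with ⟨c, rfl⟩
      rw [real_inner_smul_left, real_inner_comm, hv, mul_zero]
    have hBv : B v = -v := Submodule.reflection_orthogonalComplement_singleton_eq_neg v
    have hBw : B w = w := by
      rw [hw_def, ← integral_equivariant K B e, hBe]
    have hkey : ⟪w, v⟫ = -⟪w, v⟫ := by
      conv_lhs => rw [← B.inner_map_map w v, hBw, hBv, inner_neg_right]
    linarith
  -- hence w is a multiple of e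
  have hwe : w = ⟪w, e⟫ • e := by
    have h1 : ⟪e, w - ⟪w, e⟫ • e⟫ = 0 := by
      rw [inner_sub_right, real_inner_smul_right, real_inner_self_eq_norm_mul_norm, he,
        real_inner_comm]
      ring
    have h2 := horth _ h1
    have h3 : ⟪w - ⟪w, e⟫ • e, w - ⟪w, e⟫ • e⟫ = 0 := by
      rw [inner_sub_left, h2, real_inner_smul_left, h1, mul_zero, sub_zero]
    have h4 : w - ⟪w, e⟫ • e = 0 := by
      simpa using inner_self_eq_zero.mp h3
    rw [← sub_eq_zero]; exact h4
  refine ⟨⟪w, e⟫, ?_⟩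
  intro ω hω
  set A := Submodule.reflection (ℝ ∙ (e - ω))ᗮ with hA
  have hAe : A e = ω := Submodule.reflection_sub (he.trans hω.symm)
  calc (∫ ξ, kernelFun K ω ξ • ξ) = ∫ ξ, kernelFun K (A e) ξ • ξ := by rw [hAe]
    _ = A w := integral_equivariant K A e
    _ = A (⟪w, e⟫ • e) := by rw [← hwe]
    _ = ⟪w, e⟫ • ω := by rw [A.map_smul, hAe]
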